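/- Consider curves g₁ = (R₁,v₁,x₁) and g₂ = (R₂,v₂,x₂) in SE₂(3) satisfying ẋᵢ = vᵢ, v̇ᵢ = Rᵢaᵢ + 𝗀e₃, Ṙᵢ = RᵢΩ̂ᵢ. Then the left-invariant relative state (R, v, x) = (R₁ᵀR₂, R₁ᵀ(v₂−v₁), R₁ᵀ(x₂−x₁)) satisfies the self-contained equations Ṙ = RΩ̂₂ − Ω̂₁R, v̇ = Ra₂ − Ω̂₁v − a₁, ẋ = v − Ω̂₁x, in which the gravity term 𝗀e₃ and the absolute states have cancelled. -/

import Mathlib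

open Matrix

attribute [local instance] Matrix.linftyOpNormedRing Matrix.linftyOpNormedAlgebra

/-- The skew-symmetric hat map on `ℝ³`, satisfying `x̂ y = x × y`. -/
noncomputable def hat (ω : Fin 3 → ℝ) : Matrix (Fin 3) (Fin 3) ℝ :=
  !![0, -ω 2, ω 1; ω 2, 0, -ω 0; -ω 1, ω 0, 0]

section aux

variable {n : Type*} [Fintype n] [DecidableEq n]

/-- Transpose as a continuous linear map (finite dimensions). -/
noncomputable def transposeCLM : Matrix n n ℝ →L[ℝ] Matrix n n ℝ :=
  LinearMap.toContinuousLinearMap (Matrix.transposeLinearEquiv n n ℝ ℝ).toLinearMap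

/-- Entry evaluation as a continuous linear map. -/
noncomputable def entryCLM (i j : n) : Matrix n n ℝ →L[ℝ] ℝ :=
  LinearMap.toContinuousLinearMap
    { toFun := fun M => M i j
      map_add' := fun _ _ => rfl
      map_smul' := fun _ _ => rfl }

theorem HasDerivAt.matrix_transpose {M : ℝ → Matrix n n ℝ} {M' : Matrix n n ℝ} {t : ℝ}
    (h : HasDerivAt M M' t) : HasDerivAt (fun s => (M s)ᵀ) M'ᵀ t := by
  have := (transposeCLM (n := n)).hasFDerivAt.comp_hasDerivAt t h
  exact this

theorem HasDerivAt.matrix_entry {M : ℝ → Matrix n n ℝ} {M' : Matrix n n ℝ} {t : ℝ}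
    (h : HasDerivAt M M' t) (i j : n) :
    HasDerivAt (fun s => M s i j) (M' i j) t := by
  have := (entryCLM (n := n) i j).hasFDerivAt.comp_hasDerivAt t h
  exact this

theorem HasDerivAt.matrix_mulVec {M : ℝ → Matrix n n ℝ} {M' : Matrix n n ℝ}
    {w : ℝ → n → ℝ} {w' : n → ℝ} {t : ℝ}
    (hM : HasDerivAt M M' t) (hw : HasDerivAt w w' t) :
    HasDerivAt (fun s => M s *ᵥ w s) (M' *ᵥ w t + M t *ᵥ w') t := by
  rw [hasDerivAt_pi]
  intro i
  simp only [mulVec, dotProduct, Pi.add_apply]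
  rw [← Finset.sum_add_distrib]
  exact HasDerivAt.fun_sum fun j _ =>
    ((hM.matrix_entry i j).mul (hasDerivAt_pi.1 hw j))

theorem hat_transpose (ω : Fin 3 → ℝ) : (hat ω)ᵀ = -hat ω := by
  ext i j
  fin_cases i <;> fin_cases j <;> simp [hat]

end aux

theorem relative_vehicle_kinematics
    (R₁ R₂ : ℝ → Matrix (Fin 3) (Fin 3) ℝ)
    (v₁ v₂ x₁ x₂ Ω₁ Ω₂ a₁ a₂ : ℝ → Fin 3 → ℝ) (grav : ℝ)
    (hR₁orth : ∀ t, (R₁ t)ᵀ * R₁ t = 1)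
    (hR₂orth : ∀ t, (R₂ t)ᵀ * R₂ t = 1)
    (hdx₁ : ∀ t, HasDerivAt x₁ (v₁ t) t)
    (hdx₂ : ∀ t, HasDerivAt x₂ (v₂ t) t)
    (hdv₁ : ∀ t, HasDerivAt v₁ (R₁ t *ᵥ a₁ t + grav • ![0, 0, 1]) t)
    (hdv₂ : ∀ t, HasDerivAt v₂ (R₂ t *ᵥ a₂ t + grav • ![0, 0, 1]) t)
    (hdR₁ : ∀ t, HasDerivAt R₁ (R₁ t * hat (Ω₁ t)) t)
    (hdR₂ : ∀ t, HasDerivAt R₂ (R₂ t * hat (Ω₂ t)) t) :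
    ∀ t,
      HasDerivAt (fun s => (R₁ s)ᵀ * R₂ s)
        ((R₁ t)ᵀ * R₂ t * hat (Ω₂ t) - hat (Ω₁ t) * ((R₁ t)ᵀ * R₂ t)) t ∧
      HasDerivAt (fun s => (R₁ s)ᵀ *ᵥ (v₂ s - v₁ s))
        (((R₁ t)ᵀ * R₂ t) *ᵥ a₂ t - hat (Ω₁ t) *ᵥ ((R₁ t)ᵀ *ᵥ (v₂ t - v₁ t)) - a₁ t) t ∧
      HasDerivAt (fun s => (R₁ s)ᵀ *ᵥ (x₂ s - x₁ s))
        ((R₁ t)ᵀ *ᵥ (v₂ t - v₁ t) - hat (Ω₁ t) *ᵥ ((R₁ t)ᵀ *ᵥ (x₂ t - x₁ t))) t := by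
  intro t
  have hT : HasDerivAt (fun s => (R₁ s)ᵀ) (-(hat (Ω₁ t) * (R₁ t)ᵀ)) t := by
    have := (hdR₁ t).matrix_transpose
    rwa [transpose_mul, hat_transpose, neg_mul] at this
  refine ⟨?_, ?_, ?_⟩
  · have h1 := hT.mul (hdR₂ t)
    convert h1 using 1
    case e'_4 | e'_5 | e'_6 | e'_8 => rfl
    noncomm_ring
  · have hw : HasDerivAt (fun s => v₂ s - v₁ s) (R₂ t *ᵥ a₂ t - R₁ t *ᵥ a₁ t) t := by
      have := (hdv₂ t).sub (hdv₁ t)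
      rwa [add_sub_add_right_eq_sub] at this
    have h2 := hT.matrix_mulVec hw
    convert h2 using 1
    simp only [neg_mulVec, mulVec_sub, mulVec_mulVec, hR₁orth t, one_mulVec]
    abel
  · have h3 := hT.matrix_mulVec ((hdx₂ t).sub (hdx₁ t))
    convert h3 using 1
    case e'_8 => rfl
    simp only [neg_mulVec, Pi.sub_apply, mulVec_sub, mulVec_mulVec]
    abel
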